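/- Let α ∈ [0,1), d ≥ 1, and let {C(ℓ); ℓ ≥ 0} be d×d nonnegative matrices. Let V : [0,∞) → [1,∞) be an increasing, convex, log-concave, differentiable function with V'(0+) > 0. Suppose that for every δ > 0 at least one of the following holds: (I) lim_{k→∞} (V(k)/V'(k))·Σ_{ℓ=⌊δk^{1−α}⌋+1}^{∞} V(ℓ)·C(ℓ)·e = 0 componentwise; or (II) limsup_{ℓ→∞} V(δℓ)/V(ℓ) < ∞ and Σ_{ℓ=0}^{∞} V(ℓ^{1/(1−α)})·C(ℓ)·e is componentwise finite. Then for every δ > 0, lim_{k→∞} (1/V'(k))·Σ_{ℓ=⌊δk^{1−α}⌋+1}^{∞} V(k+ℓ)·C(ℓ)·e = 0 componentwise. -/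

import Mathlib

open Filter Set

set_option maxHeartbeats 1000000


private lemma aux_concave_slope4 {f : ℝ → ℝ} (hf : ConcaveOn ℝ (Set.Ici 0) f)
    {a b c d : ℝ} (ha : 0 ≤ a) (hab : a < b) (hbc : b ≤ c) (hcd : c < d) :
    (f d - f c) / (d - c) ≤ (f b - f a) / (b - a) := by
  have hb : (0:ℝ) ≤ b := le_trans ha hab.le
  have hc : (0:ℝ) ≤ c := le_trans hb hbc
  have hd : (0:ℝ) ≤ d := le_trans hc hcd.le
  rcases eq_or_lt_of_le hbc with rfl | hbc'
  · exact hf.slope_anti_adjacent ha hd hab hcd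
  · exact (hf.slope_anti_adjacent hb hd hbc' hcd).trans
      (hf.slope_anti_adjacent ha hc hab hbc')

private lemma aux_convex_slope4 {f : ℝ → ℝ} (hf : ConvexOn ℝ (Set.Ici 0) f)
    {a b c d : ℝ} (ha : 0 ≤ a) (hab : a < b) (hbc : b ≤ c) (hcd : c < d) :
    (f b - f a) / (b - a) ≤ (f d - f c) / (d - c) := by
  have hb : (0:ℝ) ≤ b := le_trans ha hab.le
  have hc : (0:ℝ) ≤ c := le_trans hb hbc
  have hd : (0:ℝ) ≤ d := le_trans hc hcd.le
  rcases eq_or_lt_of_le hbc with rfl | hbc'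
  · exact hf.slope_mono_adjacent ha hd hab hcd
  · exact (hf.slope_mono_adjacent ha hc hab hbc').trans
      (hf.slope_mono_adjacent hb hd hbc' hcd)

private lemma aux_4pt {f : ℝ → ℝ} (hf : ConcaveOn ℝ (Set.Ici 0) f)
    {s₀ s K : ℝ} (hs₀ : 0 ≤ s₀) (hss : s₀ ≤ s) (hK : 0 < K) :
    f (K + s) - f s ≤ f (K + s₀) - f s₀ := by
  rcases eq_or_lt_of_le hss with rfl | hss'
  · exact le_refl _
  · set lam : ℝ := (s - s₀) / (K + s - s₀) with hlam_def
    have hden : (0:ℝ) < K + s - s₀ := by linarith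
    have hlam0 : 0 ≤ lam := div_nonneg (by linarith) hden.le
    have hlam1 : 0 ≤ 1 - lam := by
      have : lam ≤ 1 := by
        rw [div_le_one hden]; linarith
      linarith
    have hmemA : s₀ ∈ Set.Ici (0:ℝ) := hs₀
    have hmemD : K + s ∈ Set.Ici (0:ℝ) := by
      simp only [Set.mem_Ici]; linarith
    have h1 := hf.2 hmemA hmemD hlam0 hlam1 (by ring)
    have h2 := hf.2 hmemA hmemD hlam1 hlam0 (by ring)
    have e1 : lam • s₀ + (1 - lam) • (K + s) = K + s₀ := by
      simp only [smul_eq_mul]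
      rw [hlam_def]
      field_simp
      ring
    have e2 : (1 - lam) • s₀ + lam • (K + s) = s := by
      simp only [smul_eq_mul]
      rw [hlam_def]
      field_simp
      ring
    rw [e1] at h1
    rw [e2] at h2
    simp only [smul_eq_mul] at h1 h2
    linarith

private lemma aux_key {V : ℝ → ℝ} {c : ℝ}
    (hV1 : ∀ x : ℝ, 0 ≤ x → 1 ≤ V x)
    (hVmono : StrictMonoOn V (Ici 0))
    (hVconv : ConvexOn ℝ (Ici 0) V)
    (hVlc : ConcaveOn ℝ (Ici 0) (fun x : ℝ => Real.log (V x)))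
    (hVd1 : ∀ x : ℝ, 0 < x → DifferentiableAt ℝ V x)
    (hc : 0 < c)
    (hcd : ∀ x : ℝ, 0 < x → c ≤ deriv V x)
    {δ₁ : ℝ} (hδ₁ : 0 < δ₁) (hδ₁half : δ₁ ≤ 1/2) :
    ∃ C₀ : ℝ, 0 < C₀ ∧ ∀ K : ℝ, 3 ≤ K → 1 ≤ δ₁ * K →
      ∀ s : ℝ, δ₁ * K ≤ s → V (K + s) ≤ C₀ * deriv V K * V s := by
  have hVpos : ∀ z : ℝ, 0 ≤ z → 0 < V z := fun z hz => lt_of_lt_of_le one_pos (hV1 z hz)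
  -- tangent line inequality for V
  have htang : ∀ x y : ℝ, 0 < x → 0 ≤ y → V x + deriv V x * (y - x) ≤ V y := by
    intro x y hx hy
    rcases lt_trichotomy x y with hxy | rfl | hyx
    · have h := hVconv.deriv_le_slope (le_of_lt hx : x ∈ Ici (0:ℝ)) (hy : y ∈ Ici (0:ℝ))
        hxy (hVd1 x hx)
      rw [slope_def_field] at h
      have hpos : (0:ℝ) < y - x := by linarith
      rw [le_div_iff₀ hpos] at h
      linarith
    · simp
    · have h := hVconv.slope_le_deriv (hy : y ∈ Ici (0:ℝ)) (le_of_lt hx : x ∈ Ici (0:ℝ))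
        hyx (hVd1 x hx)
      rw [slope_def_field] at h
      have hpos : (0:ℝ) < x - y := by linarith
      rw [div_le_iff₀ hpos] at h
      linarith
  have hV1pos : 0 < V 1 := hVpos 1 zero_le_one
  obtain ⟨A, hA⟩ : ∃ y : ℝ, y = V 1 / c + 1 := ⟨_, rfl⟩
  have hV1c : 0 < V 1 / c := div_pos hV1pos hc
  have hA1 : 1 ≤ A := by rw [hA]; linarith
  obtain ⟨cm, hcm⟩ : ∃ y : ℝ, y = min c 1 := ⟨_, rfl⟩
  have hcm0 : 0 < cm := by rw [hcm]; exact lt_min hc one_pos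
  have hcm1 : cm ≤ 1 := by rw [hcm]; exact min_le_right _ _
  have hcmc : cm ≤ c := by rw [hcm]; exact min_le_left _ _
  obtain ⟨C₁, hC₁⟩ : ∃ y : ℝ, y = max (Real.log (2*(1+A))) (max (1 + Real.log 2 - Real.log cm)
      (1 + Real.log (1+A) - Real.log cm - Real.log δ₁)) := ⟨_, rfl⟩
  have hC₁a : Real.log (2*(1+A)) ≤ C₁ := by rw [hC₁]; exact le_max_left _ _
  have hC₁b : 1 + Real.log 2 - Real.log cm ≤ C₁ := by
    rw [hC₁]; exact le_trans (le_max_left _ _) (le_max_right _ _)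
  have hC₁c : 1 + Real.log (1+A) - Real.log cm - Real.log δ₁ ≤ C₁ := by
    rw [hC₁]; exact le_trans (le_max_right _ _) (le_max_right _ _)
  -- linear lower bound for V
  have hLB : ∀ x : ℝ, 1 ≤ x → cm * x ≤ V x := by
    intro x hx
    have h1 := htang 1 x one_pos (by linarith)
    have h2 := hcd 1 one_pos
    have h3 := hV1 1 zero_le_one
    nlinarith
  refine ⟨Real.exp C₁ * V 1, by positivity, ?_⟩
  intro K hK3 hδK s hs
  have hK0 : (0:ℝ) < K := by linarith only [hK3]
  have hKm1 : (1:ℝ) ≤ K - 1 := by linarith only [hK3]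
  have hKm2 : (2:ℝ) ≤ K - 1 := by linarith only [hK3]
  obtain ⟨L, hLdef⟩ : ∃ y : ℝ, y = δ₁ * K := ⟨_, rfl⟩
  have hL1 : (1:ℝ) ≤ L := by rw [hLdef]; exact hδK
  have hsL : L ≤ s := by rw [hLdef]; exact hs
  have hLpos : (0:ℝ) < L := by linarith only [hL1]
  have hLK : L ≤ K - 1 := by
    have h : δ₁ * K ≤ (1/2) * K := mul_le_mul_of_nonneg_right hδ₁half hK0.le
    rw [hLdef]; linarith only [h, hK3]
  have hVKm1pos : 0 < V (K-1) := hVpos _ (by linarith only [hK3])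
  have hVKpos : 0 < V K := hVpos _ hK0.le
  have hVlt : V (K-1) < V K := hVmono (Set.mem_Ici.mpr (by linarith only [hK3]))
    (Set.mem_Ici.mpr hK0.le) (by linarith only [])
  obtain ⟨p, hp⟩ : ∃ y : ℝ, y = Real.log (V K) - Real.log (V (K-1)) := ⟨_, rfl⟩
  have hppos : 0 < p := by
    rw [hp]; linarith only [Real.log_lt_log hVKm1pos hVlt]
  have hl0 : 0 ≤ Real.log (V 0) := Real.log_nonneg (hV1 0 le_rfl)
  have hpf1 : p ≤ Real.log (V 1) := by
    have h : (Real.log (V K) - Real.log (V (K-1))) / (K - (K-1))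
        ≤ (Real.log (V 1) - Real.log (V 0)) / (1 - 0) :=
      aux_concave_slope4 hVlc le_rfl one_pos hKm1 (by linarith only [])
    have e2 : K - (K-1) = (1:ℝ) := by ring
    rw [e2, div_one, sub_zero, div_one] at h
    rw [hp]; linarith only [h, hl0]
  obtain ⟨D, hD⟩ : ∃ y : ℝ, y = V K - V (K-1) := ⟨_, rfl⟩
  have hDpos : 0 < D := by rw [hD]; linarith only [hVlt]
  have hcD : c ≤ D := by
    have h1 := hcd 1 one_pos
    have h2 := htang 1 2 one_pos (by norm_num)
    have h3 : (V 2 - V 1) / (2 - 1) ≤ (V K - V (K-1)) / (K - (K-1)) :=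
      aux_convex_slope4 hVconv zero_le_one (by norm_num) hKm2 (by linarith only [])
    have e1 : (2:ℝ) - 1 = 1 := by norm_num
    have e2 : K - (K-1) = (1:ℝ) := by ring
    rw [e1, e2, div_one, div_one] at h3
    rw [hD]; linarith only [h1, h2, h3]
  have hVKle : V K ≤ V 1 + (K-1) * D := by
    rcases eq_or_lt_of_le hKm2 with heq | hlt
    · have h2 : (V 2 - V 1) / (2 - 1) ≤ (V K - V (K-1)) / (K - (K-1)) :=
        aux_convex_slope4 hVconv zero_le_one (by norm_num) hKm2 (by linarith only [])
      have e1 : (2:ℝ) - 1 = 1 := by norm_num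
      have e2 : K - (K-1) = (1:ℝ) := by ring
      rw [e1, e2, div_one, div_one] at h2
      have hK1eq : K - 1 = 2 := heq.symm
      have hVK1 : V (K-1) = V 2 := by rw [hK1eq]
      have hKD : (K - 1) * D = 2 * D := by rw [hK1eq]
      rw [hKD]
      rw [hVK1] at h2
      rw [hD, hVK1]
      linarith only [h2]
    · have h : (V (K-1) - V 1) / ((K-1) - 1) ≤ (V K - V (K-1)) / (K - (K-1)) :=
        aux_convex_slope4 hVconv zero_le_one (by linarith only [hlt] : (1:ℝ) < K-1)
          (le_refl (K-1)) (by linarith only [])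
      have e2 : K - (K-1) = (1:ℝ) := by ring
      rw [e2, div_one] at h
      rw [div_le_iff₀ (by linarith only [hlt] : (0:ℝ) < (K-1) - 1)] at h
      have hexp : (V K - V (K-1)) * ((K-1) - 1) = (K - 1) * D - D := by rw [hD]; ring
      rw [hexp] at h
      rw [hD] at h ⊢
      linarith only [h]
  have hplow : D / V K ≤ p := by
    have hlog := Real.log_le_sub_one_of_pos (div_pos hVKm1pos hVKpos)
    rw [Real.log_div hVKm1pos.ne' hVKpos.ne'] at hlog
    have e : V (K-1) / V K - 1 = -(D / V K) := by
      rw [hD]; field_simp; ring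
    rw [e] at hlog
    rw [hp]; linarith only [hlog]
  have hpup : p ≤ D / V (K-1) := by
    have hlog := Real.log_le_sub_one_of_pos (div_pos hVKpos hVKm1pos)
    rw [Real.log_div hVKpos.ne' hVKm1pos.ne'] at hlog
    have e : V K / V (K-1) - 1 = D / V (K-1) := by
      rw [hD]; field_simp
    rw [e] at hlog
    rw [hp]; linarith only [hlog]
  obtain ⟨u, hu⟩ : ∃ y : ℝ, y = p⁻¹ := ⟨_, rfl⟩
  have hupos : 0 < u := by rw [hu]; exact inv_pos.mpr hppos
  have hup : u * p = 1 := by rw [hu]; exact inv_mul_cancel₀ hppos.ne'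
  have huK : u ≤ K - 1 + V 1 / c := by
    have h1 : u ≤ V K / D := by
      have h := inv_anti₀ (div_pos hDpos hVKpos) hplow
      rw [inv_div] at h
      rw [hu]; exact h
    have h4 : V 1 / D ≤ V 1 / c := div_le_div_of_nonneg_left hV1pos.le hc hcD
    have h2 : V K / D ≤ V 1 / c + (K - 1) := by
      have e : (V 1 + (K-1) * D)/D = V 1 / D + (K-1) := by field_simp
      calc V K / D ≤ (V 1 + (K-1)*D)/D := (div_le_div_iff_of_pos_right hDpos).mpr hVKle
        _ = V 1 / D + (K-1) := e
        _ ≤ V 1 / c + (K-1) := by linarith only [h4]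
    linarith only [h1, h2]
  have huKA : u ≤ K + A - 2 := by rw [hA]; linarith only [huK]
  have hlogpu : Real.log p = - Real.log u := by
    rw [hu, Real.log_inv, neg_neg]
  -- the star inequality
  have star : L * p ≤ Real.log (V L) + Real.log p + C₁ := by
    have hLp_base : p ≤ (Real.log (V L) - Real.log (V 0)) / (L - 0) := by
      have h : (Real.log (V K) - Real.log (V (K-1))) / (K - (K-1))
          ≤ (Real.log (V L) - Real.log (V 0)) / (L - 0) :=
        aux_concave_slope4 hVlc le_rfl hLpos hLK (by linarith only [])
      have e2 : K - (K-1) = (1:ℝ) := by ring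
      rw [e2, div_one] at h
      rw [hp]; exact h
    by_cases hcase : u ≤ 2*(1+A)
    · -- case A : u small
      have hLp : L * p ≤ Real.log (V L) := by
        rw [sub_zero, le_div_iff₀ hLpos] at hLp_base
        linarith only [hLp_base, hl0]
      have hloguC : Real.log u ≤ C₁ := by
        have h := Real.log_le_log hupos hcase
        linarith only [h, hC₁a]
      linarith only [hLp, hloguC, hlogpu]
    · push_neg at hcase
      obtain ⟨xs, hxs⟩ : ∃ y : ℝ, y = u - A := ⟨_, rfl⟩
      have hxs1 : 1 < xs := by rw [hxs]; linarith only [hcase, hA1]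
      have hxshalf : u / 2 < xs := by rw [hxs]; linarith only [hcase, hA1]
      have hxsK : xs ≤ K - 2 := by rw [hxs]; linarith only [huKA]
      have hxsu : xs ≤ u := by rw [hxs]; linarith only [hA1]
      have hfxs : Real.log cm + Real.log u - Real.log 2 ≤ Real.log (V xs) := by
        have h1 : cm * (u/2) ≤ cm * xs :=
          mul_le_mul_of_nonneg_left hxshalf.le hcm0.le
        have h2 : cm * xs ≤ V xs := hLB xs hxs1.le
        have h3 : Real.log (cm * (u/2)) ≤ Real.log (V xs) :=
          Real.log_le_log (by positivity) (by linarith only [h1, h2])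
        rw [Real.log_mul hcm0.ne' (by positivity), Real.log_div (by positivity)
          (by norm_num)] at h3
        linarith only [h3]
      by_cases hcase2 : xs ≤ L
      · -- case B1
        have hstep : (L - xs) * p ≤ Real.log (V L) - Real.log (V xs) := by
          rcases eq_or_lt_of_le hcase2 with heq | hlt
          · rw [heq]; simp
          · have h : (Real.log (V K) - Real.log (V (K-1))) / (K - (K-1))
                ≤ (Real.log (V L) - Real.log (V xs)) / (L - xs) :=
              aux_concave_slope4 hVlc (by linarith only [hxs1] : (0:ℝ) ≤ xs) hlt hLK
                (by linarith only [])
            have e2 : K - (K-1) = (1:ℝ) := by ring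
            rw [e2, div_one] at h
            rw [le_div_iff₀ (by linarith only [hlt] : (0:ℝ) < L - xs)] at h
            have e : (L - xs) * p = (Real.log (V K) - Real.log (V (K-1))) * (L - xs) := by
              rw [hp]; ring
            rw [e]
            linarith only [h]
        have hxp : xs * p ≤ 1 := by
          have h : xs * p ≤ u * p := mul_le_mul_of_nonneg_right hxsu hppos.le
          linarith only [h, hup]
        linarith only [hstep, hfxs, hxp, hlogpu, hC₁b]
      · -- case B2
        push_neg at hcase2
        have hLu : L < u := by rw [hxs] at hcase2; linarith only [hcase2, hA1]
        have hLp1 : L * p ≤ 1 := by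
          have h : L * p ≤ u * p := mul_le_mul_of_nonneg_right hLu.le hppos.le
          linarith only [h, hup]
        have hFL : Real.log cm + Real.log L ≤ Real.log (V L) := by
          have h2 : cm * L ≤ V L := hLB L hL1
          have h3 : Real.log (cm * L) ≤ Real.log (V L) :=
            Real.log_le_log (by positivity) h2
          rwa [Real.log_mul hcm0.ne' (by positivity)] at h3
        have hloguKA : Real.log u ≤ Real.log K + Real.log (1+A) := by
          have hKA : A ≤ K * A := by
            have h := mul_le_mul_of_nonneg_right
              (show (1:ℝ) ≤ K by linarith only [hK3]) (show (0:ℝ) ≤ A by linarith only [hA1])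
            linarith only [h]
          have h1 : u ≤ K * (1+A) := by
            have e : K * (1+A) = K + K*A := by ring
            rw [e]; linarith only [huKA, hKA]
          have h2 := Real.log_le_log hupos h1
          rwa [Real.log_mul hK0.ne' (by positivity)] at h2
        have hlogL : Real.log L = Real.log δ₁ + Real.log K := by
          rw [hLdef, Real.log_mul hδ₁.ne' hK0.ne']
        linarith only [hLp1, hFL, hloguKA, hlogL, hlogpu, hC₁c]
  -- the chain
  have h4pt : Real.log (V (K + s)) - Real.log (V s)
      ≤ Real.log (V (K + L)) - Real.log (V L) :=
    aux_4pt hVlc (by linarith only [hLpos] : (0:ℝ) ≤ L) hsL hK0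
  have htop : Real.log (V (K + L)) - Real.log (V K) ≤ L * p := by
    have h : (Real.log (V (K+L)) - Real.log (V K)) / ((K+L) - K)
        ≤ (Real.log (V K) - Real.log (V (K-1))) / (K - (K-1)) :=
      aux_concave_slope4 hVlc (by linarith only [hKm1] : (0:ℝ) ≤ K - 1)
        (by linarith only [] : K - 1 < K) (le_refl K) (by linarith only [hLpos])
    have e2 : K - (K-1) = (1:ℝ) := by ring
    have e3 : K + L - K = L := by ring
    rw [e2, e3, div_one] at h
    rw [div_le_iff₀ hLpos] at h
    have e : L * p = (Real.log (V K) - Real.log (V (K-1))) * L := by rw [hp]; ring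
    rw [e]; linarith only [h]
  have htotal : Real.log (V (K + s))
      ≤ Real.log (V s) + Real.log (V K) + Real.log p + C₁ := by
    linarith only [h4pt, htop, star]
  -- exponentiate
  have hVKp : V K * p ≤ V 1 * deriv V K := by
    have hDd : D ≤ deriv V K := by
      have h := htang K (K-1) hK0 (by linarith only [hK3])
      rw [hD]; linarith only [h]
    have hratio : V K / V (K-1) = Real.exp p := by
      rw [hp, Real.exp_sub, Real.exp_log hVKpos, Real.exp_log hVKm1pos]
    have hratio1 : V K / V (K-1) ≤ V 1 := by
      rw [hratio]
      calc Real.exp p ≤ Real.exp (Real.log (V 1)) := Real.exp_le_exp.mpr hpf1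
        _ = V 1 := Real.exp_log hV1pos
    have e : V K * p ≤ D * (V K / V (K-1)) := by
      have h := mul_le_mul_of_nonneg_left hpup hVKpos.le
      have e2 : V K * (D / V (K-1)) = D * (V K / V (K-1)) := by
        field_simp
      rw [e2] at h
      exact h
    calc V K * p ≤ D * (V K / V (K-1)) := e
      _ ≤ deriv V K * V 1 := by
          apply mul_le_mul hDd hratio1 (by positivity) ?_
          linarith only [hcd K hK0, hc]
      _ = V 1 * deriv V K := by ring
  have hVKspos : 0 < V (K + s) := hVpos _ (by linarith only [hK0, hLpos, hsL])
  have hVspos : 0 < V s := hVpos _ (by linarith only [hLpos, hsL])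
  calc V (K + s) = Real.exp (Real.log (V (K + s))) := (Real.exp_log hVKspos).symm
    _ ≤ Real.exp (Real.log (V s) + Real.log (V K) + Real.log p + C₁) :=
        Real.exp_le_exp.mpr htotal
    _ = V s * (V K * p) * Real.exp C₁ := by
        rw [Real.exp_add, Real.exp_add, Real.exp_add]
        rw [Real.exp_log hVspos, Real.exp_log hVKpos, Real.exp_log hppos]
        ring
    _ ≤ V s * (V 1 * deriv V K) * Real.exp C₁ := by
        apply mul_le_mul_of_nonneg_right ?_ (Real.exp_pos C₁).le
        exact mul_le_mul_of_nonneg_left hVKp hVspos.le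
    _ = Real.exp C₁ * V 1 * deriv V K * V s := by ring


private lemma aux_subadd {V : ℝ → ℝ}
    (hV1 : ∀ x : ℝ, 0 ≤ x → 1 ≤ V x)
    (hVlc : ConcaveOn ℝ (Ici 0) (fun x : ℝ => Real.log (V x)))
    {x y : ℝ} (hx : 0 ≤ x) (hy : 0 ≤ y) : V (x + y) ≤ V x * V y := by
  have hVpos : ∀ z : ℝ, 0 ≤ z → 0 < V z := fun z hz => lt_of_lt_of_le one_pos (hV1 z hz)
  rcases eq_or_lt_of_le (by linarith : (0:ℝ) ≤ x + y) with h0 | hpos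
  · have hx0 : x = 0 := by linarith
    have hy0 : y = 0 := by linarith
    subst hx0; subst hy0
    simp only [add_zero]
    nlinarith [hV1 0 le_rfl, hVpos 0 le_rfl]
  · set t := x + y with ht
    have hxt : (fun z => Real.log (V z)) x ≥ (x / t) * Real.log (V t) := by
      have h := hVlc.2 (le_refl (0:ℝ) : (0:ℝ) ∈ Ici (0:ℝ)) (le_of_lt hpos : t ∈ Ici (0:ℝ))
        (div_nonneg hy hpos.le) (div_nonneg hx hpos.le) (by field_simp; try rw [ht]; try ring)
      have e : (y / t) • (0:ℝ) + (x / t) • t = x := by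
        simp only [smul_eq_mul]; field_simp; ring
      rw [e] at h
      have h0 : 0 ≤ Real.log (V 0) := Real.log_nonneg (hV1 0 le_rfl)
      simp only [smul_eq_mul] at h
      have : (y / t) * Real.log (V 0) ≥ 0 := mul_nonneg (div_nonneg hy hpos.le) h0
      calc (x / t) * Real.log (V t) ≤ (y / t) * Real.log (V 0) + (x / t) * Real.log (V t) := by
            linarith
        _ ≤ Real.log (V x) := h
    have hyt : (fun z => Real.log (V z)) y ≥ (y / t) * Real.log (V t) := by
      have h := hVlc.2 (le_refl (0:ℝ) : (0:ℝ) ∈ Ici (0:ℝ)) (le_of_lt hpos : t ∈ Ici (0:ℝ))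
        (div_nonneg hx hpos.le) (div_nonneg hy hpos.le) (by field_simp; try rw [ht]; try ring)
      have e : (x / t) • (0:ℝ) + (y / t) • t = y := by
        simp only [smul_eq_mul]; field_simp; ring
      rw [e] at h
      have h0 : 0 ≤ Real.log (V 0) := Real.log_nonneg (hV1 0 le_rfl)
      simp only [smul_eq_mul] at h
      have : (x / t) * Real.log (V 0) ≥ 0 := mul_nonneg (div_nonneg hx hpos.le) h0
      calc (y / t) * Real.log (V t) ≤ (x / t) * Real.log (V 0) + (y / t) * Real.log (V t) := by
            linarith
        _ ≤ Real.log (V y) := h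
    have hsum : Real.log (V t) ≤ Real.log (V x) + Real.log (V y) := by
      simp only [ge_iff_le] at hxt hyt
      have : (x / t) * Real.log (V t) + (y / t) * Real.log (V t) = Real.log (V t) := by
        field_simp
        rw [ht]; ring
      linarith
    calc V (x + y) = Real.exp (Real.log (V t)) := by rw [Real.exp_log (hVpos t hpos.le)]
      _ ≤ Real.exp (Real.log (V x) + Real.log (V y)) := Real.exp_le_exp.mpr hsum
      _ = V x * V y := by
          rw [Real.exp_add, Real.exp_log (hVpos x hx), Real.exp_log (hVpos y hy)]


private lemma aux_summable_iff (g : ℕ → ℝ) (n : ℤ) :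
    Summable (fun l : ℕ => if n < (l:ℤ) then g l else 0) ↔ Summable g := by
  have hfin : Summable (fun l : ℕ => if n < (l:ℤ) then 0 else g l) := by
    apply summable_of_ne_finset_zero (s := Finset.range (n.toNat + 1))
    intro b hb
    rw [Finset.mem_range, not_lt] at hb
    have hnb : n < (b:ℤ) := by
      have h1 : n ≤ (n.toNat : ℤ) := Int.self_le_toNat n
      have h2 : ((n.toNat + 1 : ℕ) : ℤ) ≤ (b:ℤ) := by exact_mod_cast hb
      push_cast at h2
      omega
    rw [if_pos hnb]
  constructor
  · intro h
    refine ((h.add hfin).congr ?_)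
    intro l; by_cases hc : n < (l:ℤ) <;> simp [hc]
  · intro h
    refine ((h.sub hfin).congr ?_)
    intro l; by_cases hc : n < (l:ℤ) <;> simp [hc]

private lemma aux_tail_tendsto {g : ℕ → ℝ} (hg : Summable g) :
    Tendsto (fun m : ℕ => ∑' l : ℕ, if m < l then g l else 0) atTop (nhds 0) := by
  have key : ∀ m : ℕ, (∑' l : ℕ, if m < l then g l else 0)
      = (∑' l, g l) - ∑ l ∈ Finset.range (m + 1), g l := by
    intro m
    have hfin : Summable (fun l : ℕ => if l ∈ Finset.range (m+1) then g l else 0) :=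
      summable_of_ne_finset_zero (s := Finset.range (m+1)) (fun b hb => if_neg hb)
    have heq : (fun l : ℕ => if m < l then g l else 0)
        = fun l : ℕ => g l - (if l ∈ Finset.range (m+1) then g l else 0) := by
      funext l
      by_cases h : m < l
      · rw [if_pos h, if_neg (by simp [Finset.mem_range]; omega), sub_zero]
      · rw [if_neg h, if_pos (by simp [Finset.mem_range]; omega), sub_self]
    rw [heq, Summable.tsum_sub hg hfin]
    congr 1
    rw [tsum_eq_sum (s := Finset.range (m+1)) (fun b hb => if_neg hb)]
    exact Finset.sum_congr rfl fun b hb => if_pos hb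
  simp only [key]
  have h1 : Tendsto (fun m : ℕ => ∑ l ∈ Finset.range (m + 1), g l) atTop (nhds (∑' l, g l)) :=
    (hg.hasSum.tendsto_sum_nat).comp (tendsto_add_atTop_nat 1)
  have h2 := tendsto_const_nhds (x := (∑' l, g l)) (f := atTop (α := ℕ)) |>.sub h1
  simpa using h2

/-- Lemma A.1: let `V : [0,∞) → [1,∞)` be increasing,
convex, log-concave and differentiable with `V'(0+) > 0`, and let `{C(ℓ)}` be
nonnegative `d×d` matrices. If for every `δ > 0` at least one of the conditions
(I), (II) holds, then for every `δ > 0`,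
`(1/V'(k)) Σ_{ℓ > ⌊δ k^{1−α}⌋} V(k+ℓ) C(ℓ) e → 0` componentwise as `k → ∞`. -/
theorem tail_sum_vanishes (d : ℕ) (hd : 0 < d)
    (α : ℝ) (hα0 : 0 ≤ α) (hα1 : α < 1)
    (C : ℕ → Fin d → Fin d → ℝ) (hC : ∀ l i j, 0 ≤ C l i j)
    (V : ℝ → ℝ)
    (hV1 : ∀ x : ℝ, 0 ≤ x → 1 ≤ V x)
    (hVmono : StrictMonoOn V (Ici 0))
    (hVconv : ConvexOn ℝ (Ici 0) V)
    (hVlc : ConcaveOn ℝ (Ici 0) (fun x : ℝ => Real.log (V x)))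
    (hVd1 : ∀ x : ℝ, 0 < x → DifferentiableAt ℝ V x)
    (hV'0 : ∃ c : ℝ, 0 < c ∧ Tendsto (deriv V) (nhdsWithin 0 (Ioi 0)) (nhds c))
    (hyp : ∀ δ : ℝ, 0 < δ →
      (∀ i : Fin d,
        Tendsto (fun k : ℕ => V (k : ℝ) / deriv V (k : ℝ) *
            ∑' l : ℕ, if Int.floor (δ * (k : ℝ) ^ (1 - α)) < (l : ℤ) then
              V (l : ℝ) * ∑ j : Fin d, C l i j else 0)
          atTop (nhds 0)) ∨
      ((∃ c : ℝ, ∀ᶠ l : ℕ in atTop, V (δ * (l : ℝ)) / V (l : ℝ) ≤ c) ∧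
        ∀ i : Fin d,
          Summable fun l : ℕ => V ((l : ℝ) ^ (1 / (1 - α))) * ∑ j : Fin d, C l i j)) :
    ∀ δ : ℝ, 0 < δ → ∀ i : Fin d,
      Tendsto (fun k : ℕ => (deriv V (k : ℝ))⁻¹ *
          ∑' l : ℕ, if Int.floor (δ * (k : ℝ) ^ (1 - α)) < (l : ℤ) then
            V ((k : ℝ) + (l : ℝ)) * ∑ j : Fin d, C l i j else 0)
        atTop (nhds 0) := by
  obtain ⟨c, hc, hctend⟩ := hV'0
  have h1α : (0:ℝ) < 1 - α := by linarith
  have hVpos : ∀ z : ℝ, 0 ≤ z → 0 < V z := fun z hz => lt_of_lt_of_le one_pos (hV1 z hz)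
  have hVle : ∀ x y : ℝ, 0 ≤ x → x ≤ y → V x ≤ V y := fun x y hx hxy =>
    hVmono.monotoneOn hx (le_trans hx hxy) hxy
  -- the derivative is bounded below by c on (0,∞)
  have hdmono : MonotoneOn (deriv V) (Ioi 0) := by
    have hsub : ConvexOn ℝ (Ioi (0:ℝ)) V := hVconv.subset Ioi_subset_Ici_self (convex_Ioi 0)
    exact hsub.monotoneOn_deriv (fun x hx => hVd1 x hx)
  have hcd : ∀ x : ℝ, 0 < x → c ≤ deriv V x := by
    intro x hx
    apply le_of_tendsto hctend
    have h1 : ∀ᶠ y in nhdsWithin 0 (Ioi 0), y < x :=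
      eventually_nhdsWithin_of_eventually_nhds (eventually_lt_nhds hx)
    filter_upwards [self_mem_nhdsWithin, h1] with y hy1 hy2
    exact hdmono hy1 hx hy2.le
  intro δ hδ i
  have haN : ∀ l : ℕ, 0 ≤ ∑ j : Fin d, C l i j :=
    fun l => Finset.sum_nonneg fun j _ => hC l i j
  -- nonnegativity of the goal function, eventually
  have hlow : ∀ᶠ k : ℕ in atTop, 0 ≤ (deriv V (k : ℝ))⁻¹ *
      ∑' l : ℕ, if Int.floor (δ * (k : ℝ) ^ (1 - α)) < (l : ℤ) then
        V ((k : ℝ) + (l : ℝ)) * ∑ j : Fin d, C l i j else 0 := by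
    filter_upwards [eventually_ge_atTop 1] with k hk
    have hk0 : (0:ℝ) < (k:ℝ) := by exact_mod_cast hk
    have hd0 : 0 < deriv V (k:ℝ) := lt_of_lt_of_le hc (hcd _ hk0)
    apply mul_nonneg (inv_nonneg.mpr hd0.le)
    apply tsum_nonneg
    intro l
    by_cases hcond : Int.floor (δ * (k : ℝ) ^ (1 - α)) < (l : ℤ)
    · rw [if_pos hcond]
      exact mul_nonneg (hVpos _ (by positivity)).le (haN l)
    · rw [if_neg hcond]
  rcases hyp δ hδ with hI | ⟨_, hII⟩
  · -- Case (I)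
    by_cases hsum : Summable (fun l : ℕ => V (l:ℝ) * ∑ j : Fin d, C l i j)
    · refine tendsto_of_tendsto_of_tendsto_of_le_of_le' tendsto_const_nhds (hI i) hlow ?_
      filter_upwards [eventually_ge_atTop 1] with k hk
      have hk0 : (0:ℝ) < (k:ℝ) := by exact_mod_cast hk
      have hd0 : 0 < deriv V (k:ℝ) := lt_of_lt_of_le hc (hcd _ hk0)
      have hterm : ∀ l : ℕ,
          (if Int.floor (δ * (k : ℝ) ^ (1 - α)) < (l : ℤ) then
            V ((k : ℝ) + (l : ℝ)) * ∑ j : Fin d, C l i j else 0)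
          ≤ V (k:ℝ) * (if Int.floor (δ * (k : ℝ) ^ (1 - α)) < (l : ℤ) then
            V (l : ℝ) * ∑ j : Fin d, C l i j else 0) := by
        intro l
        by_cases hcond : Int.floor (δ * (k : ℝ) ^ (1 - α)) < (l : ℤ)
        · rw [if_pos hcond, if_pos hcond]
          have h1 : V ((k:ℝ) + (l:ℝ)) ≤ V (k:ℝ) * V (l:ℝ) :=
            aux_subadd hV1 hVlc hk0.le (Nat.cast_nonneg l)
          calc V ((k : ℝ) + (l : ℝ)) * ∑ j : Fin d, C l i j
              ≤ (V (k:ℝ) * V (l:ℝ)) * ∑ j : Fin d, C l i j :=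
                mul_le_mul_of_nonneg_right h1 (haN l)
            _ = V (k:ℝ) * (V (l : ℝ) * ∑ j : Fin d, C l i j) := by ring
        · rw [if_neg hcond, if_neg hcond, mul_zero]
      have hnonneg : ∀ l : ℕ, 0 ≤ (if Int.floor (δ * (k : ℝ) ^ (1 - α)) < (l : ℤ) then
          V ((k : ℝ) + (l : ℝ)) * ∑ j : Fin d, C l i j else 0) := by
        intro l
        by_cases hcond : Int.floor (δ * (k : ℝ) ^ (1 - α)) < (l : ℤ)
        · rw [if_pos hcond]
          exact mul_nonneg (hVpos _ (by positivity)).le (haN l)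
        · rw [if_neg hcond]
      have hS1 : Summable (fun l : ℕ => if Int.floor (δ * (k : ℝ) ^ (1 - α)) < (l : ℤ) then
          V (l : ℝ) * ∑ j : Fin d, C l i j else 0) :=
        (aux_summable_iff _ _).mpr hsum
      have hS1' : Summable (fun l : ℕ => V (k:ℝ) *
          (if Int.floor (δ * (k : ℝ) ^ (1 - α)) < (l : ℤ) then
          V (l : ℝ) * ∑ j : Fin d, C l i j else 0)) := hS1.mul_left _
      have hS2 : Summable (fun l : ℕ => if Int.floor (δ * (k : ℝ) ^ (1 - α)) < (l : ℤ) then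
          V ((k : ℝ) + (l : ℝ)) * ∑ j : Fin d, C l i j else 0) :=
        Summable.of_nonneg_of_le hnonneg hterm hS1'
      have hts := Summable.tsum_le_tsum hterm hS2 hS1'
      rw [tsum_mul_left] at hts
      have hts1 : 0 ≤ ∑' l : ℕ, (if Int.floor (δ * (k : ℝ) ^ (1 - α)) < (l : ℤ) then
          V (l : ℝ) * ∑ j : Fin d, C l i j else 0) := by
        apply tsum_nonneg
        intro l
        by_cases hcond : Int.floor (δ * (k : ℝ) ^ (1 - α)) < (l : ℤ)
        · rw [if_pos hcond]
          exact mul_nonneg (hVpos _ (Nat.cast_nonneg l)).le (haN l)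
        · rw [if_neg hcond]
      calc (deriv V (k:ℝ))⁻¹ * ∑' l : ℕ, (if Int.floor (δ * (k : ℝ) ^ (1 - α)) < (l : ℤ) then
            V ((k : ℝ) + (l : ℝ)) * ∑ j : Fin d, C l i j else 0)
          ≤ (deriv V (k:ℝ))⁻¹ * (V (k:ℝ) * ∑' l : ℕ,
            (if Int.floor (δ * (k : ℝ) ^ (1 - α)) < (l : ℤ) then
            V (l : ℝ) * ∑ j : Fin d, C l i j else 0)) :=
            mul_le_mul_of_nonneg_left hts (inv_nonneg.mpr hd0.le)
        _ = V (k:ℝ) / deriv V (k:ℝ) * ∑' l : ℕ,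
            (if Int.floor (δ * (k : ℝ) ^ (1 - α)) < (l : ℤ) then
            V (l : ℝ) * ∑ j : Fin d, C l i j else 0) := by
            rw [div_eq_mul_inv]; ring
    · -- non-summable case : everything is zero
      have hzero : ∀ k : ℕ, ¬ Summable (fun l : ℕ =>
          if Int.floor (δ * (k : ℝ) ^ (1 - α)) < (l : ℤ) then
            V ((k : ℝ) + (l : ℝ)) * ∑ j : Fin d, C l i j else 0) := by
        intro k hsum2
        apply hsum
        apply (aux_summable_iff (fun l : ℕ => V (l:ℝ) * ∑ j : Fin d, C l i j)
          (Int.floor (δ * (k : ℝ) ^ (1 - α)))).mp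
        apply Summable.of_nonneg_of_le ?_ ?_ hsum2
        · intro l
          by_cases hcond : Int.floor (δ * (k : ℝ) ^ (1 - α)) < (l : ℤ)
          · rw [if_pos hcond]
            exact mul_nonneg (hVpos _ (Nat.cast_nonneg l)).le (haN l)
          · rw [if_neg hcond]
        · intro l
          by_cases hcond : Int.floor (δ * (k : ℝ) ^ (1 - α)) < (l : ℤ)
          · rw [if_pos hcond, if_pos hcond]
            apply mul_le_mul_of_nonneg_right ?_ (haN l)
            apply hVle _ _ (Nat.cast_nonneg l)
            have : (0:ℝ) ≤ (k:ℝ) := Nat.cast_nonneg k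
            linarith
          · rw [if_neg hcond, if_neg hcond]
      have heq : (fun k : ℕ => (deriv V (k : ℝ))⁻¹ *
          ∑' l : ℕ, if Int.floor (δ * (k : ℝ) ^ (1 - α)) < (l : ℤ) then
            V ((k : ℝ) + (l : ℝ)) * ∑ j : Fin d, C l i j else 0)
          = fun _ : ℕ => (0:ℝ) := by
        funext k
        rw [tsum_eq_zero_of_not_summable (hzero k), mul_zero]
      rw [heq]
      exact tendsto_const_nhds
  · -- Case (II)
    have hg : Summable (fun l : ℕ => V ((l : ℝ) ^ (1 / (1 - α))) * ∑ j : Fin d, C l i j) :=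
      hII i
    have hgnn : ∀ l : ℕ, 0 ≤ V ((l : ℝ) ^ (1 / (1 - α))) * ∑ j : Fin d, C l i j := by
      intro l
      exact mul_nonneg (hVpos _ (Real.rpow_nonneg (Nat.cast_nonneg l) _)).le (haN l)
    have hβ1 : (1:ℝ) ≤ 1 / (1 - α) := by
      rw [le_div_iff₀ h1α]; linarith
    obtain ⟨δ₁, hδ₁def⟩ : ∃ y : ℝ, y = min (δ ^ (1 / (1 - α))) (1/2) := ⟨_, rfl⟩
    have hδβpos : 0 < δ ^ (1 / (1 - α)) := Real.rpow_pos_of_pos hδ _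
    have hδ₁pos : 0 < δ₁ := by rw [hδ₁def]; exact lt_min hδβpos (by norm_num)
    have hδ₁half : δ₁ ≤ 1/2 := by rw [hδ₁def]; exact min_le_right _ _
    have hδ₁le : δ₁ ≤ δ ^ (1 / (1 - α)) := by rw [hδ₁def]; exact min_le_left _ _
    obtain ⟨C₀, hC₀pos, hkey⟩ := aux_key hV1 hVmono hVconv hVlc hVd1 hc hcd hδ₁pos hδ₁half
    -- the natural number cutoff
    have hmtend : Tendsto (fun k : ℕ => (Int.floor (δ * (k : ℝ) ^ (1 - α))).toNat)
        atTop atTop := by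
      rw [tendsto_atTop_atTop]
      intro M
      have hx : Tendsto (fun k : ℕ => δ * (k:ℝ) ^ (1 - α)) atTop atTop := by
        apply Tendsto.const_mul_atTop hδ
        exact (tendsto_rpow_atTop h1α).comp tendsto_natCast_atTop_atTop
      have hev := hx.eventually_ge_atTop (M:ℝ)
      rw [eventually_atTop] at hev
      obtain ⟨N, hN⟩ := hev
      refine ⟨N, fun k hk => ?_⟩
      have h1 : (M:ℤ) ≤ Int.floor (δ * (k:ℝ) ^ (1 - α)) := by
        rw [Int.le_floor]
        exact_mod_cast hN k hk
      calc M = ((M:ℤ)).toNat := by simp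
        _ ≤ (Int.floor (δ * (k:ℝ) ^ (1 - α))).toNat := Int.toNat_le_toNat h1
    have hTail := (aux_tail_tendsto hg).comp hmtend
    have hupper : Tendsto (fun k : ℕ => C₀ * ((fun m : ℕ => ∑' l : ℕ,
        if m < l then V ((l : ℝ) ^ (1 / (1 - α))) * ∑ j : Fin d, C l i j else 0)
          ((Int.floor (δ * (k : ℝ) ^ (1 - α))).toNat))) atTop (nhds 0) := by
      have := hTail.const_mul C₀
      simpa using this
    refine tendsto_of_tendsto_of_tendsto_of_le_of_le' tendsto_const_nhds hupper hlow ?_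
    obtain ⟨N₁, hN₁⟩ : ∃ N₁ : ℕ, ∀ k ≥ N₁, (1:ℝ) ≤ δ₁ * (k:ℝ) := by
      refine ⟨Nat.ceil (1/δ₁) + 1, fun k hk => ?_⟩
      have h1 : (1/δ₁ : ℝ) ≤ (k:ℝ) := by
        calc (1/δ₁ : ℝ) ≤ Nat.ceil (1/δ₁ : ℝ) := Nat.le_ceil _
          _ ≤ (k:ℝ) := by exact_mod_cast Nat.le_of_succ_le hk
      have h2 : (1/δ₁ : ℝ) * δ₁ ≤ (k:ℝ) * δ₁ := mul_le_mul_of_nonneg_right h1 hδ₁pos.le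
      rw [one_div, inv_mul_cancel₀ hδ₁pos.ne'] at h2
      linarith [h2]
    filter_upwards [eventually_ge_atTop (max 3 N₁)] with k hk
    have hk3 : (3:ℕ) ≤ k := le_trans (le_max_left _ _) hk
    have hk3' : (3:ℝ) ≤ (k:ℝ) := by exact_mod_cast hk3
    have hkN₁ : N₁ ≤ k := le_trans (le_max_right _ _) hk
    have hδ₁k : (1:ℝ) ≤ δ₁ * (k:ℝ) := hN₁ k hkN₁
    have hk0 : (0:ℝ) < (k:ℝ) := by linarith
    have hd0 : 0 < deriv V (k:ℝ) := lt_of_lt_of_le hc (hcd _ hk0)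
    -- pointwise bound
    have hterm : ∀ l : ℕ,
        (if Int.floor (δ * (k : ℝ) ^ (1 - α)) < (l : ℤ) then
          V ((k : ℝ) + (l : ℝ)) * ∑ j : Fin d, C l i j else 0)
        ≤ C₀ * deriv V (k:ℝ) *
          (if (Int.floor (δ * (k : ℝ) ^ (1 - α))).toNat < l then
            V ((l : ℝ) ^ (1 / (1 - α))) * ∑ j : Fin d, C l i j else 0) := by
      intro l
      have hfloor0 : 0 ≤ Int.floor (δ * (k : ℝ) ^ (1 - α)) := by
        apply Int.floor_nonneg.mpr
        positivity
      have hiff : Int.floor (δ * (k : ℝ) ^ (1 - α)) < (l : ℤ)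
          ↔ (Int.floor (δ * (k : ℝ) ^ (1 - α))).toNat < l := by
        omega
      by_cases hcond : Int.floor (δ * (k : ℝ) ^ (1 - α)) < (l : ℤ)
      · rw [if_pos hcond, if_pos (hiff.mp hcond)]
        -- the main estimate
        have hl1 : (1:ℝ) ≤ (l:ℝ) := by
          have : (0:ℤ) < (l:ℤ) := lt_of_le_of_lt hfloor0 hcond
          exact_mod_cast this
        have hdkl : δ * (k : ℝ) ^ (1 - α) ≤ (l:ℝ) := by
          have h1 : δ * (k : ℝ) ^ (1 - α) < (Int.floor (δ * (k : ℝ) ^ (1 - α)) : ℝ) + 1 :=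
            Int.lt_floor_add_one _
          have h2 : ((Int.floor (δ * (k : ℝ) ^ (1 - α)) : ℤ) : ℝ) + 1 ≤ (l:ℝ) := by
            have : (Int.floor (δ * (k : ℝ) ^ (1 - α)) + 1 : ℤ) ≤ (l:ℤ) := hcond
            exact_mod_cast this
          linarith
              -- s
        have hls : (l:ℝ) ≤ (l:ℝ) ^ (1 / (1 - α)) := by
          calc (l:ℝ) = (l:ℝ) ^ (1:ℝ) := (Real.rpow_one _).symm
            _ ≤ (l:ℝ) ^ (1 / (1 - α)) := Real.rpow_le_rpow_of_exponent_le hl1 hβ1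
        have hs1 : δ₁ * (k:ℝ) ≤ (l:ℝ) ^ (1 / (1 - α)) := by
          have h1 : (δ * (k : ℝ) ^ (1 - α)) ^ (1 / (1 - α)) ≤ (l:ℝ) ^ (1 / (1 - α)) :=
            Real.rpow_le_rpow (by positivity) hdkl (by positivity)
          have h2 : (δ * (k : ℝ) ^ (1 - α)) ^ (1 / (1 - α))
              = δ ^ (1 / (1 - α)) * (k:ℝ) := by
            rw [Real.mul_rpow hδ.le (by positivity)]
            congr 1
            rw [← Real.rpow_mul (Nat.cast_nonneg k), mul_one_div, div_self h1α.ne',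
              Real.rpow_one]
          have h3 : δ₁ * (k:ℝ) ≤ δ ^ (1 / (1 - α)) * (k:ℝ) :=
            mul_le_mul_of_nonneg_right hδ₁le hk0.le
          rw [h2] at h1
          linarith
        have hkey' := hkey (k:ℝ) hk3' hδ₁k ((l:ℝ) ^ (1 / (1 - α))) hs1
        have hmono : V ((k:ℝ) + (l:ℝ)) ≤ V ((k:ℝ) + (l:ℝ) ^ (1 / (1 - α))) := by
          apply hVle _ _ (by positivity)
          linarith
        calc V ((k : ℝ) + (l : ℝ)) * ∑ j : Fin d, C l i j
            ≤ (C₀ * deriv V (k:ℝ) * V ((l:ℝ) ^ (1 / (1 - α)))) * ∑ j : Fin d, C l i j := by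
              apply mul_le_mul_of_nonneg_right ?_ (haN l)
              exact le_trans hmono hkey'
          _ = C₀ * deriv V (k:ℝ) * (V ((l : ℝ) ^ (1 / (1 - α))) * ∑ j : Fin d, C l i j) := by
              ring
      · rw [if_neg hcond, if_neg (fun h => hcond (hiff.mpr h)), mul_zero]
    -- summability and tsum comparison
    have hitegnn : ∀ l : ℕ, 0 ≤ (if (Int.floor (δ * (k : ℝ) ^ (1 - α))).toNat < l then
        V ((l : ℝ) ^ (1 / (1 - α))) * ∑ j : Fin d, C l i j else 0) := by
      intro l
      by_cases hcond : (Int.floor (δ * (k : ℝ) ^ (1 - α))).toNat < l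
      · rw [if_pos hcond]; exact hgnn l
      · rw [if_neg hcond]
    have hiteg : Summable (fun l : ℕ => if (Int.floor (δ * (k : ℝ) ^ (1 - α))).toNat < l then
        V ((l : ℝ) ^ (1 / (1 - α))) * ∑ j : Fin d, C l i j else 0) := by
      apply Summable.of_nonneg_of_le hitegnn ?_ hg
      intro l
      by_cases hcond : (Int.floor (δ * (k : ℝ) ^ (1 - α))).toNat < l
      · rw [if_pos hcond]
      · rw [if_neg hcond]; exact hgnn l
    have hS2nn : ∀ l : ℕ, 0 ≤ (if Int.floor (δ * (k : ℝ) ^ (1 - α)) < (l : ℤ) then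
        V ((k : ℝ) + (l : ℝ)) * ∑ j : Fin d, C l i j else 0) := by
      intro l
      by_cases hcond : Int.floor (δ * (k : ℝ) ^ (1 - α)) < (l : ℤ)
      · rw [if_pos hcond]
        exact mul_nonneg (hVpos _ (by positivity)).le (haN l)
      · rw [if_neg hcond]
    have hS2 : Summable (fun l : ℕ => if Int.floor (δ * (k : ℝ) ^ (1 - α)) < (l : ℤ) then
        V ((k : ℝ) + (l : ℝ)) * ∑ j : Fin d, C l i j else 0) :=
      Summable.of_nonneg_of_le hS2nn hterm (hiteg.mul_left _)
    have hts := Summable.tsum_le_tsum hterm hS2 (hiteg.mul_left _)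
    rw [tsum_mul_left] at hts
    calc (deriv V (k:ℝ))⁻¹ * ∑' l : ℕ, (if Int.floor (δ * (k : ℝ) ^ (1 - α)) < (l : ℤ) then
          V ((k : ℝ) + (l : ℝ)) * ∑ j : Fin d, C l i j else 0)
        ≤ (deriv V (k:ℝ))⁻¹ * (C₀ * deriv V (k:ℝ) * ∑' l : ℕ,
          (if (Int.floor (δ * (k : ℝ) ^ (1 - α))).toNat < l then
          V ((l : ℝ) ^ (1 / (1 - α))) * ∑ j : Fin d, C l i j else 0)) :=
          mul_le_mul_of_nonneg_left hts (inv_nonneg.mpr hd0.le)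
      _ = C₀ * ∑' l : ℕ, (if (Int.floor (δ * (k : ℝ) ^ (1 - α))).toNat < l then
          V ((l : ℝ) ^ (1 / (1 - α))) * ∑ j : Fin d, C l i j else 0) := by
          field_simp
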